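/- Consider the single-node binary model over horizon n. For every slot k with 1 ≤ k ≤ n−1 and every carryover m with n−k+1 ≤ m ≤ B, the optimal value function satisfies V_k(m) = E[log(1+h_k)] + V_{k+1}(n−k); in particular, when the available energy exceeds the number of remaining slots, it is optimal to transmit in slot k. -/

import Mathlib

open MeasureTheory ProbabilityTheory

namespace EHBinary

variable {Ω : Type*} [MeasurableSpace Ω]

/-- Carryover energy of a continuation problem started at slot `k` with
carryover `c_{k-1} = m`: `ccarry … j = c_j`, with `c_j = m` for `j < k` and
`c_j = min (c_{j-1} + E_j) B - F_j` for `j ≥ k`. -/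
def ccarry (B : ℕ) (Earr F : ℕ → Ω → ℕ) (k m : ℕ) : ℕ → Ω → ℕ
  | 0 => fun _ => m
  | j + 1 => fun ω =>
      if j + 1 < k then m
      else min (ccarry B Earr F k m j ω + Earr (j + 1) ω) B - F (j + 1) ω

/-- Available energy `U_j = min (c_{j-1} + E_j) B` in the continuation problem. -/
def cavail (B : ℕ) (Earr F : ℕ → Ω → ℕ) (k m j : ℕ) (ω : Ω) : ℕ :=
  min (ccarry B Earr F k m (j - 1) ω + Earr j ω) B

/-- The σ-algebra generated by `(E_k, …, E_j, h_k, …, h_j)`. -/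
def histFrom (Earr : ℕ → Ω → ℕ) (h : ℕ → Ω → ℝ) (k j : ℕ) : MeasurableSpace Ω :=
  MeasurableSpace.comap
    (fun ω => ((fun i : Fin (j + 1 - k) => Earr (k + i.1) ω),
               (fun i : Fin (j + 1 - k) => h (k + i.1) ω)))
    inferInstance

/-- Admissible binary continuation policy from slot `k` with carryover `m`:
for `k ≤ j ≤ n`, `F_j ∈ {0,1}`, `F_j ≤ U_j`, and `F_j` is a measurable
function of `(E_k, …, E_j, h_k, …, h_j)`. -/
def IsContPolicy (n B : ℕ) (Earr : ℕ → Ω → ℕ) (h : ℕ → Ω → ℝ) (k m : ℕ)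
    (F : ℕ → Ω → ℕ) : Prop :=
  (∀ j, k ≤ j → j ≤ n → ∀ ω, F j ω ≤ 1) ∧
  (∀ j, k ≤ j → j ≤ n → ∀ ω, F j ω ≤ cavail B Earr F k m j ω) ∧
  (∀ j, k ≤ j → j ≤ n → Measurable[histFrom Earr h k j] (F j))

/-- The optimal value function `V_k(m)`: the supremum, over admissible
continuation policies from slot `k` with carryover `c_{k-1} = m`, of the
expected continuation payoff `E [∑_{j=k}^n log (1 + F_j h_j)]`. -/
noncomputable def V (μ : Measure Ω) (n B : ℕ) (Earr : ℕ → Ω → ℕ) (h : ℕ → Ω → ℝ)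
    (k m : ℕ) : ℝ :=
  sSup {y : ℝ | ∃ F : ℕ → Ω → ℕ, IsContPolicy n B Earr h k m F ∧
    y = ∫ ω, ∑ j ∈ Finset.Icc k n, Real.log (1 + (F j ω : ℝ) * h j ω) ∂μ}


lemma histFrom_le (Earr : ℕ → Ω → ℕ) (h : ℕ → Ω → ℝ)
    (hEm : ∀ i, Measurable (Earr i)) (hhm : ∀ i, Measurable (h i)) (k j : ℕ) :
    histFrom Earr h k j ≤ ‹MeasurableSpace Ω› := by
  intro s hs
  obtain ⟨t, ht, rfl⟩ := hs
  exact (Measurable.prod (measurable_pi_lambda _ fun i => hEm _)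
    (measurable_pi_lambda _ fun i => hhm _)) ht

lemma ccarry_ge (n B : ℕ) (Earr F : ℕ → Ω → ℕ) (s m : ℕ) (ω : Ω)
    (hs : 1 ≤ s) (hm : n + 1 ≤ m + s) (hB : n + 1 ≤ B + s)
    (hF : ∀ j, s ≤ j → j ≤ n → F j ω ≤ 1) :
    ∀ j, j ≤ n → n ≤ ccarry B Earr F s m j ω + max j (s - 1) := by
  intro j
  induction j with
  | zero =>
    intro _
    simp only [ccarry]
    omega
  | succ j ih =>
    intro hjn
    by_cases hlt : j + 1 < s
    · simp only [ccarry, if_pos hlt]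
      omega
    · have hIH := ih (by omega)
      have hFle := hF (j + 1) (by omega) hjn
      simp only [ccarry, if_neg hlt]
      omega

lemma one_le_cavail (n B : ℕ) (Earr F : ℕ → Ω → ℕ) (s m : ℕ) (ω : Ω)
    (hs : 1 ≤ s) (hm : n + 1 ≤ m + s) (hB : n + 1 ≤ B + s)
    (hF : ∀ j, s ≤ j → j ≤ n → F j ω ≤ 1)
    (j : ℕ) (hj1 : s ≤ j) (hjn : j ≤ n) :
    1 ≤ cavail B Earr F s m j ω := by
  have hc := ccarry_ge n B Earr F s m ω hs hm hB hF (j - 1) (by omega)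
  unfold cavail
  omega

lemma V_eq (μ : Measure Ω) [IsProbabilityMeasure μ]
    (n B : ℕ) (Earr : ℕ → Ω → ℕ) (h : ℕ → Ω → ℝ) (φ : Measure ℝ)
    (hhm : ∀ k, Measurable (h k)) (hEm : ∀ k, Measurable (Earr k))
    (hlaw : ∀ j, 1 ≤ j → j ≤ n → Measure.map (h j) μ = φ)
    (hpos : ∀ j ω, 0 ≤ h j ω)
    (hint : Integrable (fun x => Real.log (1 + x)) φ)
    (s m : ℕ) (hs1 : 1 ≤ s) (hsn : s ≤ n)
    (hm : n + 1 ≤ m + s) (hB : n + 1 ≤ B + s) :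
    V μ n B Earr h s m = (n + 1 - s : ℕ) * ∫ x, Real.log (1 + x) ∂φ := by
  set C := ∫ x, Real.log (1 + x) ∂φ with hCdef
  have hg : Measurable fun x : ℝ => Real.log (1 + x) :=
    Real.measurable_log.comp (measurable_const.add measurable_id)
  have hlint : ∀ j, s ≤ j → j ≤ n → Integrable (fun ω => Real.log (1 + h j ω)) μ := by
    intro j hj1 hjn
    exact (integrable_map_measure hg.aestronglyMeasurable (hhm j).aemeasurable).mp
      (by rwa [hlaw j (le_trans hs1 hj1) hjn])
  have hIeq : ∀ j, s ≤ j → j ≤ n → ∫ ω, Real.log (1 + h j ω) ∂μ = C := by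
    intro j hj1 hjn
    rw [hCdef, ← hlaw j (le_trans hs1 hj1) hjn]
    exact (integral_map (hhm j).aemeasurable hg.aestronglyMeasurable).symm
  set S := {y : ℝ | ∃ F : ℕ → Ω → ℕ, IsContPolicy n B Earr h s m F ∧
    y = ∫ ω, ∑ j ∈ Finset.Icc s n, Real.log (1 + (F j ω : ℝ) * h j ω) ∂μ} with hS
  have hub : ∀ y ∈ S, y ≤ (n + 1 - s : ℕ) * C := by
    rintro y ⟨F, ⟨hF1, hF2, hF3⟩, rfl⟩
    have hFm : ∀ j, s ≤ j → j ≤ n → Measurable (F j) := fun j hj1 hj2 =>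
      (hF3 j hj1 hj2).mono (histFrom_le Earr h hEm hhm s j) le_rfl
    have hbd : ∀ j, s ≤ j → j ≤ n → ∀ ω : Ω,
        Real.log (1 + (F j ω : ℝ) * h j ω) ≤ Real.log (1 + h j ω) ∧
        0 ≤ Real.log (1 + (F j ω : ℝ) * h j ω) := by
      intro j hj1 hj2 ω
      have h0 : (0 : ℝ) ≤ (F j ω : ℝ) * h j ω :=
        mul_nonneg (Nat.cast_nonneg _) (hpos j ω)
      have h1 : (F j ω : ℝ) * h j ω ≤ h j ω := by
        have hle : (F j ω : ℝ) ≤ 1 := by exact_mod_cast hF1 j hj1 hj2 ω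
        nlinarith [hpos j ω]
      constructor
      · exact Real.log_le_log (by linarith) (by linarith)
      · exact Real.log_nonneg (by linarith)
    have hti : ∀ j ∈ Finset.Icc s n,
        Integrable (fun ω => Real.log (1 + (F j ω : ℝ) * h j ω)) μ := by
      intro j hj
      rw [Finset.mem_Icc] at hj
      refine (hlint j hj.1 hj.2).mono' ?_ (Filter.Eventually.of_forall fun ω => ?_)
      · exact (hg.comp ((measurable_from_top.comp (hFm j hj.1 hj.2)).mul (hhm j))).aestronglyMeasurable
      · rw [Real.norm_eq_abs, abs_of_nonneg (hbd j hj.1 hj.2 ω).2]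
        exact (hbd j hj.1 hj.2 ω).1
    rw [integral_finset_sum _ hti]
    calc ∑ j ∈ Finset.Icc s n, ∫ ω, Real.log (1 + (F j ω : ℝ) * h j ω) ∂μ
        ≤ ∑ j ∈ Finset.Icc s n, C := by
          refine Finset.sum_le_sum fun j hj => ?_
          have hj' := Finset.mem_Icc.mp hj
          rw [← hIeq j hj'.1 hj'.2]
          exact integral_mono (hti j hj) (hlint j hj'.1 hj'.2)
            (fun ω => (hbd j hj'.1 hj'.2 ω).1)
      _ = (n + 1 - s : ℕ) * C := by
          rw [Finset.sum_const, Nat.card_Icc, nsmul_eq_mul]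
  have hmem : ((n + 1 - s : ℕ) * C) ∈ S := by
    refine ⟨fun _ _ => 1, ⟨fun j _ _ ω => le_rfl,
      fun j hj1 hj2 ω => one_le_cavail n B Earr _ s m ω hs1 hm hB
        (fun _ _ _ => le_rfl) j hj1 hj2,
      fun j _ _ => measurable_const⟩, ?_⟩
    simp only [Nat.cast_one, one_mul]
    rw [integral_finset_sum _ (fun j hj => by
      have hj' := Finset.mem_Icc.mp hj
      exact hlint j hj'.1 hj'.2)]
    rw [Finset.sum_congr rfl (fun j hj => by
      have hj' := Finset.mem_Icc.mp hj
      exact hIeq j hj'.1 hj'.2)]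
    rw [Finset.sum_const, Nat.card_Icc, nsmul_eq_mul]
  have : sSup S = (n + 1 - s : ℕ) * C :=
    le_antisymm (csSup_le ⟨_, hmem⟩ hub) (le_csSup ⟨_, hub⟩ hmem)
  simpa [V, hS] using this

/-- For `1 ≤ k ≤ n - 1` and `n - k + 1 ≤ m ≤ B` (available energy exceeds the
number of remaining slots), `V_k(m) = E[log (1 + h_k)] + V_{k+1}(n - k)`; in
particular it is optimal to transmit in slot `k` (transmitting now and
continuing optimally attains `V_k(m)`). -/
theorem value_when_energy_abundant
    (μ : Measure Ω) [IsProbabilityMeasure μ]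
    (n B : ℕ) (hn : 1 ≤ n) (hB : 1 ≤ B)
    (p : ℝ) (hp0 : 0 ≤ p) (hp1 : p ≤ 1)
    (φ : Measure ℝ) [IsProbabilityMeasure φ]
    (h : ℕ → Ω → ℝ) (Earr : ℕ → Ω → ℕ)
    (hhm : ∀ k, Measurable (h k)) (hEm : ∀ k, Measurable (Earr k))
    (hlaw : ∀ k, 1 ≤ k → k ≤ n → Measure.map (h k) μ = φ)
    (hpos : ∀ k ω, 0 ≤ h k ω)
    (hint : Integrable (fun x => Real.log (1 + x)) φ)
    (hE01 : ∀ k ω, Earr k ω ≤ 1)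
    (hEp : ∀ k, 1 ≤ k → k ≤ n → μ {ω | Earr k ω = 1} = ENNReal.ofReal p)
    (hindep : iIndepFun
      (fun (k : Fin n) ω => (Earr (k.1 + 1) ω, h (k.1 + 1) ω)) μ)
    (hpair : ∀ k, 1 ≤ k → k ≤ n → IndepFun (Earr k) (h k) μ)
    (k m : ℕ) (hk1 : 1 ≤ k) (hk : k ≤ n - 1) (hm1 : n - k + 1 ≤ m) (hm : m ≤ B) :
    V μ n B Earr h k m = (∫ x, Real.log (1 + x) ∂φ) + V μ n B Earr h (k + 1) (n - k) ∧
    V μ n B Earr h k m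
      = ∫ ω, (Real.log (1 + h k ω)
          + V μ n B Earr h (k + 1) (min (m + Earr k ω) B - 1)) ∂μ := by
  have hkn : k + 1 ≤ n := by omega
  set C := ∫ x, Real.log (1 + x) ∂φ with hCdef
  have hg : Measurable fun x : ℝ => Real.log (1 + x) :=
    Real.measurable_log.comp (measurable_const.add measurable_id)
  have hVk : V μ n B Earr h k m = (n + 1 - k : ℕ) * C :=
    V_eq μ n B Earr h φ hhm hEm hlaw hpos hint k m hk1 (by omega) (by omega) (by omega)
  have hVk1 : V μ n B Earr h (k + 1) (n - k) = (n + 1 - (k + 1) : ℕ) * C :=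
    V_eq μ n B Earr h φ hhm hEm hlaw hpos hint (k + 1) (n - k) (by omega) hkn
      (by omega) (by omega)
  have hcast : ((n + 1 - k : ℕ) : ℝ) = 1 + ((n + 1 - (k + 1) : ℕ) : ℝ) := by
    have : n + 1 - k = (n + 1 - (k + 1)) + 1 := by omega
    rw [this]; push_cast; ring
  constructor
  · rw [hVk, hVk1, hcast]; ring
  · have hconst : ∀ ω : Ω,
        V μ n B Earr h (k + 1) (min (m + Earr k ω) B - 1) = (n + 1 - (k + 1) : ℕ) * C := by
      intro ω
      exact V_eq μ n B Earr h φ hhm hEm hlaw hpos hint (k + 1) _ (by omega) hkn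
        (by omega) (by omega)
    have hfun : (fun ω => Real.log (1 + h k ω)
          + V μ n B Earr h (k + 1) (min (m + Earr k ω) B - 1))
        = fun ω => Real.log (1 + h k ω) + ((n + 1 - (k + 1) : ℕ) : ℝ) * C :=
      funext fun ω => by rw [hconst ω]
    have hlintk : Integrable (fun ω => Real.log (1 + h k ω)) μ :=
      (integrable_map_measure hg.aestronglyMeasurable (hhm k).aemeasurable).mp
        (by rwa [hlaw k hk1 (by omega)])
    have hIk : ∫ ω, Real.log (1 + h k ω) ∂μ = C := by
      rw [hCdef, ← hlaw k hk1 (by omega)]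
      exact (integral_map (hhm k).aemeasurable hg.aestronglyMeasurable).symm
    rw [hfun, integral_add hlintk (integrable_const _), hIk, integral_const,
      probReal_univ, one_smul, hVk, hcast]
    ring

end EHBinary
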